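/- arXiv:2604.12771 — 4 statements merged into one kernel-verified Lean document; each statement's English description precedes it below -/
import Mathlib

section
/- Let p ≥ 2, let Σ be a positive definite p×p matrix, and let X = Σ^{1/2} u R, where u is uniformly distributed on the unit sphere S^{p−1} ⊂ ℝ^p and R ≥ 0 is a real random variable independent of u with E[R²] = p and E[R⁴] < ∞. Then for all symmetric p×p matrices A and B: (1/4)·Cov(XᵀAX, XᵀBX) = (1/2)·tr(ΣAΣB) + (E[R⁴]/(p(p+2)) − 1)·[(1/2)·tr(ΣAΣB) + (1/4)·tr(ΣA)·tr(ΣB)]. (Equivalently, the score covariance matrix C△ = (1/4)Cov(vec(XXᵀ)) of the Gaussian loss agrees, as a bilinear form on vectorized symmetric matrices, with C + (E[R⁴]/(p(p+2)) − 1)·(C + (1/4)vec(Σ)vec(Σ)ᵀ), where C = (1/2)(Σ⊗Σ).) -/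
open MeasureTheory ProbabilityTheory Matrix
open scoped MatrixOrder

lemma integral_comp_orthog {Ω : Type*} [MeasurableSpace Ω] (μ : Measure Ω)
    {p : ℕ} (u : Ω → Fin p → ℝ) (hu : Measurable u)
    (hurot : ∀ O : Matrix.orthogonalGroup (Fin p) ℝ,
      Measure.map (fun ω => (O : Matrix (Fin p) (Fin p) ℝ) *ᵥ u ω) μ = Measure.map u μ)
    (O : Matrix.orthogonalGroup (Fin p) ℝ)
    (g : (Fin p → ℝ) → ℝ) (hg : Measurable g) :
    ∫ ω, g ((O : Matrix (Fin p) (Fin p) ℝ) *ᵥ u ω) ∂μ = ∫ ω, g (u ω) ∂μ := by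
  have hmv : Measurable fun x : Fin p → ℝ => (O : Matrix (Fin p) (Fin p) ℝ) *ᵥ x :=
    (Matrix.mulVecLin (O : Matrix (Fin p) (Fin p) ℝ)).continuous_of_finiteDimensional.measurable
  have hf : AEMeasurable (fun ω => (O : Matrix (Fin p) (Fin p) ℝ) *ᵥ u ω) μ :=
    (hmv.comp hu).aemeasurable
  have h1 : ∫ ω, g ((O : Matrix (Fin p) (Fin p) ℝ) *ᵥ u ω) ∂μ
      = ∫ x, g x ∂(Measure.map (fun ω => (O : Matrix (Fin p) (Fin p) ℝ) *ᵥ u ω) μ) :=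
    (integral_map hf hg.aestronglyMeasurable).symm
  rw [h1, hurot O, integral_map hu.aemeasurable hg.aestronglyMeasurable]

lemma flip_mem {p : ℕ} (a : Fin p) :
    Matrix.diagonal (fun i => if i = a then (-1:ℝ) else 1) ∈ Matrix.orthogonalGroup (Fin p) ℝ := by
  rw [Matrix.mem_unitaryGroup_iff]
  have h1 : star (Matrix.diagonal (fun i => if i = a then (-1:ℝ) else 1))
      = Matrix.diagonal (fun i => if i = a then (-1:ℝ) else 1) := by
    rw [Matrix.star_eq_conjTranspose, Matrix.diagonal_conjTranspose]
    congr 1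
  have h2 : (fun i => (if i = a then (-1:ℝ) else 1) * (if i = a then (-1:ℝ) else 1))
      = fun _ => (1:ℝ) := by
    funext i
    split_ifs <;> norm_num
  rw [h1, Matrix.diagonal_mul_diagonal, h2, Matrix.diagonal_one]

lemma perm_mem {p : ℕ} (σ : Equiv.Perm (Fin p)) :
    σ.permMatrix ℝ ∈ Matrix.orthogonalGroup (Fin p) ℝ := by
  rw [Matrix.mem_unitaryGroup_iff, Matrix.star_eq_conjTranspose,
    Matrix.conjTranspose_eq_transpose_of_trivial]
  show σ.toPEquiv.toMatrix * σ.toPEquiv.toMatrixᵀ = 1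
  rw [← PEquiv.toMatrix_symm, ← Equiv.toPEquiv_symm, ← PEquiv.toMatrix_trans,
    ← Equiv.toPEquiv_trans, Equiv.self_trans_symm, Equiv.toPEquiv_refl, PEquiv.toMatrix_refl]

lemma perm_mulVec {p : ℕ} (σ : Equiv.Perm (Fin p)) (x : Fin p → ℝ) :
    (σ.permMatrix ℝ) *ᵥ x = fun i => x (σ i) := by
  ext i
  simp [Matrix.mulVec, dotProduct, Equiv.Perm.permMatrix, PEquiv.toMatrix_apply,
    Equiv.toPEquiv_apply, ite_mul, Finset.sum_ite_eq']

lemma sum_pair_eq {α M : Type*} [Fintype α] [DecidableEq α] [AddCommMonoid M] {f : α → M}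
    {a b : α} (hab : a ≠ b) (h : ∀ k, k ≠ a → k ≠ b → f k = 0) : ∑ k, f k = f a + f b := by
  rw [← Finset.sum_subset (Finset.subset_univ ({a, b} : Finset α))
    (fun x _ hx => by
      simp only [Finset.mem_insert, Finset.mem_singleton, not_or] at hx
      exact h x hx.1 hx.2), Finset.sum_pair hab]

def rotM {p : ℕ} (c : ℝ) (a b : Fin p) : Matrix (Fin p) (Fin p) ℝ :=
  Matrix.of fun i j =>
    if i = a then (if j = a then c else if j = b then c else 0)
    else if i = b then (if j = a then -c else if j = b then c else 0)
    else if i = j then 1 else 0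

lemma hcc : (Real.sqrt 2 / 2) * (Real.sqrt 2 / 2) = 1 / 2 := by
  rw [div_mul_div_comm, Real.mul_self_sqrt (by norm_num)]
  norm_num

lemma rot_mem {p : ℕ} {c : ℝ} (hc : c * c = 1 / 2) (a b : Fin p) (hab : a ≠ b) :
    rotM c a b ∈ Matrix.orthogonalGroup (Fin p) ℝ := by
  have hba : b ≠ a := hab.symm
  rw [Matrix.mem_unitaryGroup_iff, Matrix.star_eq_conjTranspose,
    Matrix.conjTranspose_eq_transpose_of_trivial]
  ext i j
  rw [Matrix.mul_apply]
  simp only [Matrix.transpose_apply, Matrix.one_apply]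
  by_cases hia : i = a
  · by_cases hja : j = a
    · rw [sum_pair_eq hab (fun k hk1 hk2 => by simp [rotM, hia, hja, hk1, hk2])]
      simp [rotM, hia, hja, hab, hba]
      linear_combination 2 * hc
    · by_cases hjb : j = b
      · rw [sum_pair_eq hab (fun k hk1 hk2 => by simp [rotM, hia, hjb, hab, hba, hk1, hk2])]
        simp [rotM, hia, hjb, hab, hba]
      · rw [Finset.sum_eq_single j (fun k _ hk => by simp [rotM, hja, hjb, (Ne.symm hk)])
          (by simp)]
        simp [rotM, hia, hja, hjb, hab, hba, Ne.symm hja]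
  · by_cases hib : i = b
    · by_cases hja : j = a
      · rw [sum_pair_eq hab (fun k hk1 hk2 => by simp [rotM, hib, hja, hab, hba, hk1, hk2])]
        simp [rotM, hib, hja, hab, hba]
      · by_cases hjb : j = b
        · rw [sum_pair_eq hab (fun k hk1 hk2 => by simp [rotM, hib, hjb, hab, hba, hk1, hk2])]
          simp [rotM, hib, hjb, hab, hba]
          linear_combination 2 * hc
        · rw [Finset.sum_eq_single j (fun k _ hk => by simp [rotM, hja, hjb, (Ne.symm hk)])
            (by simp)]
          simp [rotM, hib, hja, hjb, hab, hba, Ne.symm hjb]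
    · rw [Finset.sum_eq_single i (fun k _ hk => by simp [rotM, hia, hib, (Ne.symm hk)])
        (by simp)]
      by_cases hja : j = a
      · simp [rotM, hia, hib, hja, Ne.symm hia]
      · by_cases hjb : j = b
        · simp [rotM, hia, hib, hjb, Ne.symm hib]
        · simp only [rotM, Matrix.of_apply, hia, hib, hja, hjb, if_false, if_pos rfl]
          by_cases hij : i = j
          · simp [hij]
          · simp [hij, Ne.symm hij]

lemma rot_mulVec {p : ℕ} (c : ℝ) (a b : Fin p) (hab : a ≠ b) (x : Fin p → ℝ) :
    (rotM c a b *ᵥ x) a = c * x a + c * x b := by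
  show ∑ j, rotM c a b a j * x j = _
  rw [sum_pair_eq hab (fun k hk1 hk2 => by simp [rotM, hk1, hk2])]
  simp [rotM, Ne.symm hab, hab]

lemma integral_five {Ω : Type*} [MeasurableSpace Ω] {μ : Measure Ω} {f1 f2 f3 f4 f5 : Ω → ℝ}
    (h1 : Integrable f1 μ) (h2 : Integrable f2 μ) (h3 : Integrable f3 μ)
    (h4 : Integrable f4 μ) (h5 : Integrable f5 μ) :
    ∫ ω, f1 ω + f2 ω + f3 ω + f4 ω + f5 ω ∂μ
      = (∫ ω, f1 ω ∂μ) + (∫ ω, f2 ω ∂μ) + (∫ ω, f3 ω ∂μ) + (∫ ω, f4 ω ∂μ) + ∫ ω, f5 ω ∂μ := by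
  have h12 : Integrable (fun ω => f1 ω + f2 ω) μ := h1.add h2
  have h123 : Integrable (fun ω => f1 ω + f2 ω + f3 ω) μ := h12.add h3
  have h1234 : Integrable (fun ω => f1 ω + f2 ω + f3 ω + f4 ω) μ := h123.add h4
  rw [integral_add h1234 h5, integral_add h123 h4, integral_add h12 h3, integral_add h1 h2]

section moments
variable {Ω : Type*} [MeasurableSpace Ω] {μ : Measure Ω} [IsProbabilityMeasure μ]
  {p : ℕ} {u : Ω → Fin p → ℝ}

lemma coord_bd {x : Fin p → ℝ} (hx : ∑ t, x t ^ 2 = 1) (i : Fin p) : |x i| ≤ 1 := by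
  have h1 : x i ^ 2 ≤ 1 := by
    rw [← hx]
    exact Finset.single_le_sum (f := fun t => x t ^ 2) (fun t _ => sq_nonneg _)
      (Finset.mem_univ i)
  nlinarith [abs_nonneg (x i), sq_abs (x i)]

lemma meas4 (i j k l : Fin p) : Measurable fun x : Fin p → ℝ => x i * x j * x k * x l :=
  (((measurable_pi_apply i).mul (measurable_pi_apply j)).mul (measurable_pi_apply k)).mul
    (measurable_pi_apply l)

lemma meas2 (i j : Fin p) : Measurable fun x : Fin p → ℝ => x i * x j :=
  (measurable_pi_apply i).mul (measurable_pi_apply j)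

lemma integ4 (hu : Measurable u) (husphere : ∀ᵐ ω ∂μ, ∑ t, (u ω t) ^ 2 = 1) (i j k l : Fin p) :
    Integrable (fun ω => u ω i * u ω j * u ω k * u ω l) μ := by
  refine Integrable.mono' (integrable_const (1:ℝ))
    ((meas4 i j k l).comp hu).aestronglyMeasurable ?_
  filter_upwards [husphere] with ω h
  rw [Real.norm_eq_abs, abs_mul, abs_mul, abs_mul]
  have b1 := coord_bd h i; have b2 := coord_bd h j
  have b3 := coord_bd h k; have b4 := coord_bd h l
  have a1 := abs_nonneg (u ω i); have a2 := abs_nonneg (u ω j); have a3 := abs_nonneg (u ω k)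
  have a4 := abs_nonneg (u ω l)
  have h12 : |u ω i| * |u ω j| ≤ 1 := by nlinarith
  have h123 : |u ω i| * |u ω j| * |u ω k| ≤ 1 := by nlinarith [mul_nonneg a1 a2]
  nlinarith [mul_nonneg (mul_nonneg a1 a2) a3]

lemma integ2 (hu : Measurable u) (husphere : ∀ᵐ ω ∂μ, ∑ t, (u ω t) ^ 2 = 1) (i j : Fin p) :
    Integrable (fun ω => u ω i * u ω j) μ := by
  refine Integrable.mono' (integrable_const (1:ℝ))
    ((meas2 i j).comp hu).aestronglyMeasurable ?_
  filter_upwards [husphere] with ω h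
  rw [Real.norm_eq_abs, abs_mul]
  have b1 := coord_bd h i; have b2 := coord_bd h j
  have a1 := abs_nonneg (u ω i)
  nlinarith

set_option linter.unusedSectionVars false

variable (hu : Measurable u)
  (hurot : ∀ O : Matrix.orthogonalGroup (Fin p) ℝ,
      Measure.map (fun ω => (O : Matrix (Fin p) (Fin p) ℝ) *ᵥ u ω) μ = Measure.map u μ)

include hu hurot in
lemma flip4 (a i j k l : Fin p) :
    ∫ ω, u ω i * u ω j * u ω k * u ω l ∂μ
      = ((if i = a then (-1:ℝ) else 1) * (if j = a then (-1:ℝ) else 1)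
          * (if k = a then (-1:ℝ) else 1) * (if l = a then (-1:ℝ) else 1))
        * ∫ ω, u ω i * u ω j * u ω k * u ω l ∂μ := by
  have key := integral_comp_orthog μ u hu hurot ⟨_, flip_mem a⟩ _ (meas4 i j k l)
  have h2 : (∫ ω, ((Matrix.diagonal fun t => if t = a then (-1:ℝ) else 1) *ᵥ u ω) i
        * ((Matrix.diagonal fun t => if t = a then (-1:ℝ) else 1) *ᵥ u ω) j
        * ((Matrix.diagonal fun t => if t = a then (-1:ℝ) else 1) *ᵥ u ω) k
        * ((Matrix.diagonal fun t => if t = a then (-1:ℝ) else 1) *ᵥ u ω) l ∂μ)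
      = ∫ ω, ((if i = a then (-1:ℝ) else 1) * (if j = a then (-1:ℝ) else 1)
          * (if k = a then (-1:ℝ) else 1) * (if l = a then (-1:ℝ) else 1))
        * (u ω i * u ω j * u ω k * u ω l) ∂μ := by
    congr 1
    funext ω
    simp only [Matrix.mulVec_diagonal]
    ring
  rw [h2, integral_const_mul] at key
  exact key.symm

include hu hurot in
lemma perm4 (σ : Equiv.Perm (Fin p)) (i j k l : Fin p) :
    ∫ ω, u ω (σ i) * u ω (σ j) * u ω (σ k) * u ω (σ l) ∂μ
      = ∫ ω, u ω i * u ω j * u ω k * u ω l ∂μ := by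
  have key := integral_comp_orthog μ u hu hurot ⟨σ.permMatrix ℝ, perm_mem σ⟩ _ (meas4 i j k l)
  have h2 : (∫ ω, ((σ.permMatrix ℝ) *ᵥ u ω) i * ((σ.permMatrix ℝ) *ᵥ u ω) j
        * ((σ.permMatrix ℝ) *ᵥ u ω) k * ((σ.permMatrix ℝ) *ᵥ u ω) l ∂μ)
      = ∫ ω, u ω (σ i) * u ω (σ j) * u ω (σ k) * u ω (σ l) ∂μ := by
    congr 1
    funext ω
    rw [perm_mulVec]
  rw [h2] at key
  exact key

include hu hurot in
lemma flip2 (a i j : Fin p) :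
    ∫ ω, u ω i * u ω j ∂μ
      = ((if i = a then (-1:ℝ) else 1) * (if j = a then (-1:ℝ) else 1))
        * ∫ ω, u ω i * u ω j ∂μ := by
  have hg : Measurable fun x : Fin p → ℝ => x i * x j :=
    (measurable_pi_apply i).mul (measurable_pi_apply j)
  have key := integral_comp_orthog μ u hu hurot ⟨_, flip_mem a⟩ _ hg
  have h2 : (∫ ω, ((Matrix.diagonal fun t => if t = a then (-1:ℝ) else 1) *ᵥ u ω) i
        * ((Matrix.diagonal fun t => if t = a then (-1:ℝ) else 1) *ᵥ u ω) j ∂μ)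
      = ∫ ω, ((if i = a then (-1:ℝ) else 1) * (if j = a then (-1:ℝ) else 1))
        * (u ω i * u ω j) ∂μ := by
    congr 1
    funext ω
    simp only [Matrix.mulVec_diagonal]
    ring
  rw [h2, integral_const_mul] at key
  exact key.symm

include hu hurot in
lemma perm2 (σ : Equiv.Perm (Fin p)) (i j : Fin p) :
    ∫ ω, u ω (σ i) * u ω (σ j) ∂μ = ∫ ω, u ω i * u ω j ∂μ := by
  have hg : Measurable fun x : Fin p → ℝ => x i * x j :=
    (measurable_pi_apply i).mul (measurable_pi_apply j)
  have key := integral_comp_orthog μ u hu hurot ⟨σ.permMatrix ℝ, perm_mem σ⟩ _ hg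
  have h2 : (∫ ω, ((σ.permMatrix ℝ) *ᵥ u ω) i * ((σ.permMatrix ℝ) *ᵥ u ω) j ∂μ)
      = ∫ ω, u ω (σ i) * u ω (σ j) ∂μ := by
    congr 1
    funext ω
    rw [perm_mulVec]
  rw [h2] at key
  exact key

include hu hurot in
lemma q_zero1 {i j k l : Fin p} (hj : j ≠ i) (hk : k ≠ i) (hl : l ≠ i) :
    ∫ ω, u ω i * u ω j * u ω k * u ω l ∂μ = 0 := by
  have h := flip4 hu hurot i i j k l
  rw [if_pos rfl, if_neg hj, if_neg hk, if_neg hl] at h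
  norm_num at h
  linarith

include hu hurot in
lemma q_perm_pair (hp : 2 ≤ p) {i k : Fin p} (hik : i ≠ k) :
    ∫ ω, u ω i * u ω i * u ω k * u ω k ∂μ
      = ∫ ω, u ω ⟨0, by omega⟩ * u ω ⟨0, by omega⟩ * u ω ⟨1, by omega⟩ * u ω ⟨1, by omega⟩ ∂μ := by
  set i0 : Fin p := ⟨0, by omega⟩
  set i1 : Fin p := ⟨1, by omega⟩
  have h01 : i0 ≠ i1 := by simp [i0, i1, Fin.ext_iff]
  have hk0 : (Equiv.swap i0 i).symm k ≠ i0 := by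
    intro h
    apply hik
    have h2 := congrArg (Equiv.swap i0 i) h
    rw [Equiv.apply_symm_apply, Equiv.swap_apply_left] at h2
    exact h2.symm
  have key := perm4 hu hurot
    ((Equiv.swap i1 ((Equiv.swap i0 i).symm k)).trans (Equiv.swap i0 i)) i0 i0 i1 i1
  have hσ0 : ((Equiv.swap i1 ((Equiv.swap i0 i).symm k)).trans (Equiv.swap i0 i)) i0 = i := by
    rw [Equiv.trans_apply, Equiv.swap_apply_of_ne_of_ne h01 (Ne.symm hk0),
      Equiv.swap_apply_left]
  have hσ1 : ((Equiv.swap i1 ((Equiv.swap i0 i).symm k)).trans (Equiv.swap i0 i)) i1 = k := by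
    rw [Equiv.trans_apply, Equiv.swap_apply_left, Equiv.apply_symm_apply]
  rw [hσ0, hσ1] at key
  exact key

include hu hurot in
lemma q_perm_four (hp : 2 ≤ p) (i : Fin p) :
    ∫ ω, u ω i * u ω i * u ω i * u ω i ∂μ
      = ∫ ω, u ω ⟨0, by omega⟩ * u ω ⟨0, by omega⟩ * u ω ⟨0, by omega⟩ * u ω ⟨0, by omega⟩ ∂μ := by
  set i0 : Fin p := ⟨0, by omega⟩
  have := perm4 hu hurot (Equiv.swap i0 i) i0 i0 i0 i0
  rw [Equiv.swap_apply_left] at this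
  exact this

include hu hurot in
lemma m_perm (hp : 2 ≤ p) (i : Fin p) :
    ∫ ω, u ω i * u ω i ∂μ = ∫ ω, u ω ⟨0, by omega⟩ * u ω ⟨0, by omega⟩ ∂μ := by
  set i0 : Fin p := ⟨0, by omega⟩
  have := perm2 hu hurot (Equiv.swap i0 i) i0 i0
  rw [Equiv.swap_apply_left] at this
  exact this

include hu hurot in
lemma m_off {i j : Fin p} (hij : i ≠ j) : ∫ ω, u ω i * u ω j ∂μ = 0 := by
  have h := flip2 hu hurot i i j
  rw [if_pos rfl, if_neg (Ne.symm hij)] at h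
  norm_num at h
  linarith

variable (husphere : ∀ᵐ ω ∂μ, ∑ t, (u ω t) ^ 2 = 1)

include hu husphere in
lemma sum_m : ∑ i, ∫ ω, u ω i * u ω i ∂μ = 1 := by
  rw [← integral_finset_sum _ (fun i _ => integ2 hu husphere i i)]
  have h : ∫ ω, ∑ i, u ω i * u ω i ∂μ = ∫ _ω, (1:ℝ) ∂μ := by
    refine integral_congr_ae (husphere.mono fun ω h => ?_)
    rw [← h]
    exact Finset.sum_congr rfl fun t _ => (sq (u ω t)).symm
  rw [h, integral_const]
  simp

include hu hurot husphere in
lemma m_val (hp : 2 ≤ p) (i : Fin p) : ∫ ω, u ω i * u ω i ∂μ = 1 / p := by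
  have hsum := sum_m hu husphere
  have hconst : ∀ j : Fin p, ∫ ω, u ω j * u ω j ∂μ
      = ∫ ω, u ω ⟨0, by omega⟩ * u ω ⟨0, by omega⟩ ∂μ := fun j => m_perm hu hurot hp j
  rw [Finset.sum_congr rfl (fun j _ => hconst j), Finset.sum_const, Finset.card_univ,
    Fintype.card_fin, nsmul_eq_mul] at hsum
  have hp0 : (p : ℝ) ≠ 0 := by positivity
  rw [hconst i]
  field_simp
  simp only [sq]
  linarith [hsum]

include hu hurot husphere in
lemma m4_eq_3m22 (hp : 2 ≤ p) :
    ∫ ω, u ω ⟨0, by omega⟩ * u ω ⟨0, by omega⟩ * u ω ⟨0, by omega⟩ * u ω ⟨0, by omega⟩ ∂μ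
      = 3 * ∫ ω, u ω ⟨0, by omega⟩ * u ω ⟨0, by omega⟩ * u ω ⟨1, by omega⟩ * u ω ⟨1, by omega⟩ ∂μ := by
  set i0 : Fin p := ⟨0, by omega⟩
  set i1 : Fin p := ⟨1, by omega⟩
  have h01 : i0 ≠ i1 := by simp [i0, i1, Fin.ext_iff]
  set c : ℝ := Real.sqrt 2 / 2 with hcdef
  have hc : c * c = 1 / 2 := hcc
  set m4 := ∫ ω, u ω i0 * u ω i0 * u ω i0 * u ω i0 ∂μ with hm4
  set m22 := ∫ ω, u ω i0 * u ω i0 * u ω i1 * u ω i1 ∂μ with hm22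
  have key := integral_comp_orthog μ u hu hurot ⟨rotM c i0 i1, rot_mem hc i0 i1 h01⟩ _
    (meas4 i0 i0 i0 i0)
  -- rewrite LHS of key
  have hpt : ∀ ω, (rotM c i0 i1 *ᵥ u ω) i0 * (rotM c i0 i1 *ᵥ u ω) i0
        * (rotM c i0 i1 *ᵥ u ω) i0 * (rotM c i0 i1 *ᵥ u ω) i0
      = (c*c*(c*c)) * (u ω i0 * u ω i0 * u ω i0 * u ω i0)
        + (4*(c*c*(c*c))) * (u ω i1 * u ω i0 * u ω i0 * u ω i0)
        + (6*(c*c*(c*c))) * (u ω i0 * u ω i0 * u ω i1 * u ω i1)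
        + (4*(c*c*(c*c))) * (u ω i0 * u ω i1 * u ω i1 * u ω i1)
        + (c*c*(c*c)) * (u ω i1 * u ω i1 * u ω i1 * u ω i1) := by
    intro ω
    rw [rot_mulVec c i0 i1 h01]
    ring
  have hint : ∀ (a : ℝ) (i j k l : Fin p),
      Integrable (fun ω => a * (u ω i * u ω j * u ω k * u ω l)) μ :=
    fun a i j k l => (integ4 hu husphere i j k l).const_mul a
  have hLHS : (∫ ω, (rotM c i0 i1 *ᵥ u ω) i0 * (rotM c i0 i1 *ᵥ u ω) i0
        * (rotM c i0 i1 *ᵥ u ω) i0 * (rotM c i0 i1 *ᵥ u ω) i0 ∂μ)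
      = (c*c*(c*c)) * m4
        + (4*(c*c*(c*c))) * (∫ ω, u ω i1 * u ω i0 * u ω i0 * u ω i0 ∂μ)
        + (6*(c*c*(c*c))) * m22
        + (4*(c*c*(c*c))) * (∫ ω, u ω i0 * u ω i1 * u ω i1 * u ω i1 ∂μ)
        + (c*c*(c*c)) * (∫ ω, u ω i1 * u ω i1 * u ω i1 * u ω i1 ∂μ) := by
    rw [integral_congr_ae (Filter.Eventually.of_forall hpt)]
    rw [integral_five (hint (c*c*(c*c)) i0 i0 i0 i0) (hint (4*(c*c*(c*c))) i1 i0 i0 i0)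
      (hint (6*(c*c*(c*c))) i0 i0 i1 i1) (hint (4*(c*c*(c*c))) i0 i1 i1 i1)
      (hint (c*c*(c*c)) i1 i1 i1 i1)]
    simp only [integral_const_mul]
    rfl
  have hz1 : ∫ ω, u ω i1 * u ω i0 * u ω i0 * u ω i0 ∂μ = 0 :=
    q_zero1 hu hurot h01 h01 h01
  have hz2 : ∫ ω, u ω i0 * u ω i1 * u ω i1 * u ω i1 ∂μ = 0 :=
    q_zero1 hu hurot h01.symm h01.symm h01.symm
  have h4 : ∫ ω, u ω i1 * u ω i1 * u ω i1 * u ω i1 ∂μ = m4 := q_perm_four hu hurot hp i1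
  rw [hLHS, hz1, hz2, h4] at key
  have hcc4 : c*c*(c*c) = 1/4 := by rw [hc]; norm_num
  rw [hcc4] at key
  linarith

include hu hurot husphere in
lemma m22_val (hp : 2 ≤ p) :
    ∫ ω, u ω ⟨0, by omega⟩ * u ω ⟨0, by omega⟩ * u ω ⟨1, by omega⟩ * u ω ⟨1, by omega⟩ ∂μ
      = 1 / (p * (p + 2)) := by
  set i0 : Fin p := ⟨0, by omega⟩
  set i1 : Fin p := ⟨1, by omega⟩
  set m22 := ∫ ω, u ω i0 * u ω i0 * u ω i1 * u ω i1 ∂μ with hm22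
  set m4 := ∫ ω, u ω i0 * u ω i0 * u ω i0 * u ω i0 ∂μ with hm4
  have h3 : m4 = 3 * m22 := m4_eq_3m22 hu hurot husphere hp
  have hsum1 : ∑ i : Fin p, ∑ k : Fin p, ∫ ω, u ω i * u ω i * u ω k * u ω k ∂μ = 1 := by
    have hstep1 : ∀ i : Fin p, ∑ k : Fin p, ∫ ω, u ω i * u ω i * u ω k * u ω k ∂μ
        = ∫ ω, ∑ k : Fin p, u ω i * u ω i * u ω k * u ω k ∂μ :=
      fun i => (integral_finset_sum _ (fun k _ => integ4 hu husphere i i k k)).symm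
    rw [Finset.sum_congr rfl (fun i _ => hstep1 i),
      ← integral_finset_sum _ (fun i _ =>
        integrable_finset_sum _ (fun k _ => integ4 hu husphere i i k k))]
    have hptw : ∀ᵐ ω ∂μ, ∑ i : Fin p, ∑ k : Fin p, u ω i * u ω i * u ω k * u ω k = 1 := by
      filter_upwards [husphere] with ω h
      have hs : ∑ t, u ω t * u ω t = 1 := by
        rw [← h]
        exact Finset.sum_congr rfl fun t _ => (sq (u ω t)).symm
      calc ∑ i : Fin p, ∑ k : Fin p, u ω i * u ω i * u ω k * u ω k
          = (∑ i, u ω i * u ω i) * (∑ k, u ω k * u ω k) := by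
            rw [Finset.sum_mul_sum]
            exact Finset.sum_congr rfl fun i _ => Finset.sum_congr rfl fun k _ => by ring
        _ = 1 := by rw [hs]; norm_num
    rw [integral_congr_ae hptw]
    simp
  have hQ : ∀ i k : Fin p, ∫ ω, u ω i * u ω i * u ω k * u ω k ∂μ
      = m22 + (if k = i then m4 - m22 else 0) := by
    intro i k
    by_cases h : k = i
    · subst h
      rw [if_pos rfl, q_perm_four hu hurot hp k]
      ring
    · rw [if_neg h, q_perm_pair hu hurot hp (fun hh => h hh.symm)]
      ring
  rw [Finset.sum_congr rfl (fun i _ => Finset.sum_congr rfl (fun k _ => hQ i k))] at hsum1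
  have hinner : ∀ i : Fin p, ∑ k : Fin p, (m22 + (if k = i then m4 - m22 else 0))
      = p * m22 + (m4 - m22) := by
    intro i
    rw [Finset.sum_add_distrib, Finset.sum_const, Finset.card_univ, Fintype.card_fin,
      nsmul_eq_mul, Finset.sum_ite_eq' Finset.univ i (fun _ => m4 - m22)]
    simp
  rw [Finset.sum_congr rfl (fun i _ => hinner i), Finset.sum_const, Finset.card_univ,
    Fintype.card_fin, nsmul_eq_mul] at hsum1
  have hp0 : (0:ℝ) < p := by positivity
  have hp2 : (0:ℝ) < (p:ℝ) * (p + 2) := by positivity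
  field_simp
  nlinarith [hsum1, h3]

include hu hurot husphere in
lemma q_val_pair (hp : 2 ≤ p) {i k : Fin p} (hik : i ≠ k) :
    ∫ ω, u ω i * u ω i * u ω k * u ω k ∂μ = 1 / (p * (p + 2)) := by
  rw [q_perm_pair hu hurot hp hik, m22_val hu hurot husphere hp]

include hu hurot husphere in
lemma q_val_four (hp : 2 ≤ p) (i : Fin p) :
    ∫ ω, u ω i * u ω i * u ω i * u ω i ∂μ = 3 / (p * (p + 2)) := by
  rw [q_perm_four hu hurot hp i, m4_eq_3m22 hu hurot husphere hp,
    m22_val hu hurot husphere hp]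
  ring

include hu hurot husphere in
lemma q_formula (hp : 2 ≤ p) (i j k l : Fin p) :
    ∫ ω, u ω i * u ω j * u ω k * u ω l ∂μ
      = (1 / (p * (p + 2)))
        * ((if i = j then (1:ℝ) else 0) * (if k = l then (1:ℝ) else 0)
          + (if i = k then (1:ℝ) else 0) * (if j = l then (1:ℝ) else 0)
          + (if i = l then (1:ℝ) else 0) * (if j = k then (1:ℝ) else 0)) := by
  have hre : ∀ a b c d a' b' c' d' : Fin p,
      (∀ x : Fin p → ℝ, x a * x b * x c * x d = x a' * x b' * x c' * x d') →
      ∫ ω, u ω a * u ω b * u ω c * u ω d ∂μ = ∫ ω, u ω a' * u ω b' * u ω c' * u ω d' ∂μ :=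
    fun a b c d a' b' c' d' h =>
      integral_congr_ae (Filter.Eventually.of_forall fun ω => h (u ω))
  by_cases hij : i = j
  · by_cases hkl : k = l
    · by_cases hik : i = k
      · rw [← hij, ← hkl, ← hik, q_val_four hu hurot husphere hp i]
        norm_num
        rw [div_eq_mul_inv, mul_inv]
        ring
      · rw [← hij, ← hkl, q_val_pair hu hurot husphere hp hik]
        simp [hik]
    · by_cases hik : i = k
      · have hli : l ≠ i := by
          intro h
          apply hkl
          rw [h]
          exact hik.symm
        rw [← hij, ← hik, hre i i i l l i i i (fun x => by ring),
          q_zero1 hu hurot (Ne.symm hli) (Ne.symm hli) (Ne.symm hli)]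
        simp [Ne.symm hli]
      · by_cases hil : i = l
        · rw [← hij, ← hil, hre i i k i k i i i (fun x => by ring),
            q_zero1 hu hurot hik hik hik]
          have hki : k ≠ i := fun h => hik h.symm
          simp [hik, hki]
        · rw [← hij, hre i i k l k i i l (fun x => by ring),
            q_zero1 hu hurot hik hik (fun h : l = k => hkl h.symm)]
          simp [hik, hil, hkl]
  · by_cases hik : i = k
    · by_cases hjl : j = l
      · rw [← hik, ← hjl, hre i j i j i i j j (fun x => by ring),
          q_val_pair hu hurot husphere hp hij]
        simp [hij, Ne.symm hij]
      · rw [← hik, hre i j i l j i i l (fun x => by ring),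
          q_zero1 hu hurot hij hij (fun h : l = j => hjl h.symm)]
        simp [hij, hjl, Ne.symm hij]
    · by_cases hil : i = l
      · by_cases hjk : j = k
        · rw [← hil, ← hjk, hre i j j i i i j j (fun x => by ring),
            q_val_pair hu hurot husphere hp hij]
          simp [hij, Ne.symm hij]
        · rw [← hil, hre i j k i j i k i (fun x => by ring),
            q_zero1 hu hurot hij (fun h : k = j => hjk h.symm) hij]
          have hki : k ≠ i := fun h => hik h.symm
          simp [hij, hik, hjk, Ne.symm hij, hki]
      · rw [q_zero1 hu hurot (Ne.symm hij) (fun h : k = i => hik h.symm)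
          (fun h : l = i => hil h.symm)]
        simp [hij, hik, hil]

include hu hurot husphere in
lemma m_formula (hp : 2 ≤ p) (i j : Fin p) :
    ∫ ω, u ω i * u ω j ∂μ = (1 / p) * (if i = j then (1:ℝ) else 0) := by
  by_cases hij : i = j
  · subst hij
    rw [m_val hu hurot husphere hp i, if_pos rfl, mul_one]
  · rw [m_off hu hurot hij, if_neg hij, mul_zero]

lemma quadform_eq {p : ℕ} (M : Matrix (Fin p) (Fin p) ℝ) (x : Fin p → ℝ) :
    x ⬝ᵥ M *ᵥ x = ∑ i, ∑ j, M i j * (x i * x j) := by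
  simp only [dotProduct, Matrix.mulVec, Finset.mul_sum]
  exact Finset.sum_congr rfl fun i _ => Finset.sum_congr rfl fun j _ => by ring

lemma meas_quad {p : ℕ} (M : Matrix (Fin p) (Fin p) ℝ) :
    Measurable fun x : Fin p → ℝ => x ⬝ᵥ M *ᵥ x := by
  have : (fun x : Fin p → ℝ => x ⬝ᵥ M *ᵥ x)
      = fun x => ∑ i, ∑ j, M i j * (x i * x j) := funext fun x => quadform_eq M x
  rw [this]
  exact Finset.measurable_sum _ fun i _ =>
    Finset.measurable_sum _ fun j _ => (meas2 i j).const_mul _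

include hu hurot husphere in
lemma E_quad (hp : 2 ≤ p) (M : Matrix (Fin p) (Fin p) ℝ) :
    ∫ ω, (u ω) ⬝ᵥ M *ᵥ (u ω) ∂μ = M.trace / p := by
  rw [integral_congr_ae (Filter.Eventually.of_forall fun ω => quadform_eq M (u ω))]
  rw [integral_finset_sum _ (fun i _ => (integrable_finset_sum _
    (fun j _ => (integ2 hu husphere i j).const_mul _) :
      Integrable (fun ω => ∑ j, M i j * (u ω i * u ω j)) μ))]
  have hstep : ∀ i : Fin p, ∫ ω, ∑ j, M i j * (u ω i * u ω j) ∂μ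
      = ∑ j, M i j * ∫ ω, u ω i * u ω j ∂μ := by
    intro i
    rw [integral_finset_sum _ (fun j _ => (integ2 hu husphere i j).const_mul _)]
    exact Finset.sum_congr rfl fun j _ => integral_const_mul _ _
  rw [Finset.sum_congr rfl fun i _ => hstep i]
  have hval : ∀ i j : Fin p, M i j * ∫ ω, u ω i * u ω j ∂μ
      = if i = j then M i j * (1 / p) else 0 := by
    intro i j
    rw [m_formula hu hurot husphere hp i j]
    split_ifs <;> ring
  rw [Finset.sum_congr rfl fun i _ => Finset.sum_congr rfl fun j _ => hval i j]
  simp [Finset.sum_ite_eq, Matrix.trace, Matrix.diag, Finset.sum_div]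
  exact Finset.sum_congr rfl fun i _ => by ring

include hu hurot husphere in
lemma E_quad_mul (hp : 2 ≤ p) (M N : Matrix (Fin p) (Fin p) ℝ) :
    ∫ ω, ((u ω) ⬝ᵥ M *ᵥ (u ω)) * ((u ω) ⬝ᵥ N *ᵥ (u ω)) ∂μ
      = (1 / (p * (p + 2)))
        * (M.trace * N.trace + (∑ i, ∑ j, M i j * N i j) + ∑ i, ∑ j, M i j * N j i) := by
  have hpt : ∀ x : Fin p → ℝ, (x ⬝ᵥ M *ᵥ x) * (x ⬝ᵥ N *ᵥ x)
      = ∑ i, ∑ j, ∑ k, ∑ l, (M i j * N k l) * (x i * x j * x k * x l) := by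
    intro x
    rw [quadform_eq, quadform_eq, Finset.sum_mul]
    refine Finset.sum_congr rfl fun i _ => ?_
    rw [Finset.sum_mul]
    refine Finset.sum_congr rfl fun j _ => ?_
    rw [Finset.mul_sum]
    refine Finset.sum_congr rfl fun k _ => ?_
    rw [Finset.mul_sum]
    refine Finset.sum_congr rfl fun l _ => ?_
    ring
  have I0 : ∀ i j k l : Fin p,
      Integrable (fun ω => (M i j * N k l) * (u ω i * u ω j * u ω k * u ω l)) μ :=
    fun i j k l => (integ4 hu husphere i j k l).const_mul _
  have I1 : ∀ i j k : Fin p, Integrable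
      (fun ω => ∑ l, (M i j * N k l) * (u ω i * u ω j * u ω k * u ω l)) μ :=
    fun i j k => integrable_finset_sum _ fun l _ => I0 i j k l
  have I2 : ∀ i j : Fin p, Integrable
      (fun ω => ∑ k, ∑ l, (M i j * N k l) * (u ω i * u ω j * u ω k * u ω l)) μ :=
    fun i j => integrable_finset_sum _ fun k _ => I1 i j k
  have I3 : ∀ i : Fin p, Integrable
      (fun ω => ∑ j, ∑ k, ∑ l, (M i j * N k l) * (u ω i * u ω j * u ω k * u ω l)) μ :=
    fun i => integrable_finset_sum _ fun j _ => I2 i j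
  rw [integral_congr_ae (Filter.Eventually.of_forall fun ω => hpt (u ω)),
    integral_finset_sum _ (fun i _ => I3 i)]
  have hswap : ∀ i : Fin p,
      ∫ ω, ∑ j, ∑ k, ∑ l, (M i j * N k l) * (u ω i * u ω j * u ω k * u ω l) ∂μ
      = ∑ j, ∑ k, ∑ l, (M i j * N k l) * ∫ ω, u ω i * u ω j * u ω k * u ω l ∂μ := by
    intro i
    rw [integral_finset_sum _ (fun j _ => I2 i j)]
    refine Finset.sum_congr rfl fun j _ => ?_
    rw [integral_finset_sum _ (fun k _ => I1 i j k)]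
    refine Finset.sum_congr rfl fun k _ => ?_
    rw [integral_finset_sum _ (fun l _ => I0 i j k l)]
    exact Finset.sum_congr rfl fun l _ => integral_const_mul _ _
  rw [Finset.sum_congr rfl fun i _ => hswap i]
  have hqv : ∀ i j k l : Fin p, (M i j * N k l) * ∫ ω, u ω i * u ω j * u ω k * u ω l ∂μ
      = (M i j * N k l) * ((1 / (p * (p + 2)))
        * ((if i = j then (1:ℝ) else 0) * (if k = l then (1:ℝ) else 0)
          + (if i = k then (1:ℝ) else 0) * (if j = l then (1:ℝ) else 0)
          + (if i = l then (1:ℝ) else 0) * (if j = k then (1:ℝ) else 0))) :=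
    fun i j k l => by rw [q_formula hu hurot husphere hp i j k l]
  rw [Finset.sum_congr rfl fun i _ => Finset.sum_congr rfl fun j _ =>
    Finset.sum_congr rfl fun k _ => Finset.sum_congr rfl fun l _ => hqv i j k l]
  -- now pure algebra
  have hterm : ∀ i j k l : Fin p, (M i j * N k l)
        * ((1 / (p * (p + 2))) * ((if i = j then (1:ℝ) else 0) * (if k = l then (1:ℝ) else 0)
          + (if i = k then (1:ℝ) else 0) * (if j = l then (1:ℝ) else 0)
          + (if i = l then (1:ℝ) else 0) * (if j = k then (1:ℝ) else 0)))
      = (1 / (p * (p + 2)) : ℝ)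
          * ((if i = j then (1:ℝ) else 0) * (if k = l then (1:ℝ) else 0) * (M i j * N k l)
          + (if i = k then (1:ℝ) else 0) * (if j = l then (1:ℝ) else 0) * (M i j * N k l)
          + (if i = l then (1:ℝ) else 0) * (if j = k then (1:ℝ) else 0) * (M i j * N k l)) := by
    intro i j k l; ring
  simp only [hterm, ← Finset.mul_sum, Finset.sum_add_distrib]
  congr 1
  congr 1
  congr 1
  · simp [ite_mul, zero_mul, one_mul, Finset.sum_ite_eq, Matrix.trace, Matrix.diag,
      Finset.sum_mul, Finset.mul_sum]
    rw [Finset.sum_comm]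
  · simp [ite_mul, zero_mul, one_mul, Finset.sum_ite_eq]
  · simp [ite_mul, zero_mul, one_mul, Finset.sum_ite_eq]

end moments

/-- Let `X = Σ^{1/2} u R` be elliptical with `u` uniform on the sphere,
`R ≥ 0` independent of `u`, `E[R²] = p` and `E[R⁴] < ∞`. Then for all symmetric `A`, `B`:
`(1/4)·Cov(XᵀAX, XᵀBX) = (1/2)tr(ΣAΣB) + (E[R⁴]/(p(p+2)) − 1)·((1/2)tr(ΣAΣB) + (1/4)tr(ΣA)tr(ΣB))`. -/
theorem stmt2
    {Ω : Type*} [MeasurableSpace Ω] (μ : Measure Ω) [IsProbabilityMeasure μ]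
    {p : ℕ} (hp : 2 ≤ p)
    (Sg : Matrix (Fin p) (Fin p) ℝ) (hSg : Sg.PosDef)
    (u : Ω → Fin p → ℝ) (hu : Measurable u)
    (husphere : ∀ᵐ ω ∂μ, ∑ i, (u ω i) ^ 2 = 1)
    (hurot : ∀ O : Matrix.orthogonalGroup (Fin p) ℝ,
      Measure.map (fun ω => (O : Matrix (Fin p) (Fin p) ℝ) *ᵥ u ω) μ = Measure.map u μ)
    (R : Ω → ℝ) (hR : Measurable R) (hRpos : ∀ ω, 0 ≤ R ω)
    (hindep : IndepFun u R μ)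
    (hR2 : ∫ ω, (R ω) ^ 2 ∂μ = p)
    (hR4 : Integrable (fun ω => (R ω) ^ 4) μ)
    (X : Ω → Fin p → ℝ)
    (hXdef : ∀ ω, X ω = R ω • (CFC.sqrt Sg *ᵥ u ω))
    (A B : Matrix (Fin p) (Fin p) ℝ) (hA : A.IsHermitian) (hB : B.IsHermitian) :
    (1 / 4 : ℝ) * ((∫ ω, (X ω ⬝ᵥ A *ᵥ X ω) * (X ω ⬝ᵥ B *ᵥ X ω) ∂μ)
        - (∫ ω, X ω ⬝ᵥ A *ᵥ X ω ∂μ) * (∫ ω, X ω ⬝ᵥ B *ᵥ X ω ∂μ))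
      = (1 / 2 : ℝ) * (Sg * A * Sg * B).trace
        + ((∫ ω, (R ω) ^ 4 ∂μ) / (p * (p + 2)) - 1)
          * ((1 / 2 : ℝ) * (Sg * A * Sg * B).trace
              + (1 / 4 : ℝ) * (Sg * A).trace * (Sg * B).trace) := by
  set S := CFC.sqrt Sg with hSdef
  have hSherm : S.IsHermitian := (CFC.sqrt_nonneg Sg).isSelfAdjoint.isHermitian
  have hSsymm : Sᵀ = S := by
    rw [← Matrix.conjTranspose_eq_transpose_of_trivial]
    exact hSherm
  have hSS : S * S = Sg := CFC.sqrt_mul_sqrt_self Sg hSg.posSemidef.nonneg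
  -- pointwise quadratic form identity
  have hkey : ∀ (P : Matrix (Fin p) (Fin p) ℝ) (ω : Ω),
      X ω ⬝ᵥ P *ᵥ X ω = R ω ^ 2 * (u ω ⬝ᵥ (S * P * S) *ᵥ u ω) := by
    intro P ω
    rw [hXdef ω, Matrix.mulVec_smul, dotProduct_smul, smul_dotProduct,
      Matrix.mulVec_mulVec, Matrix.dotProduct_mulVec, Matrix.vecMul_mulVec, hSsymm,
      ← Matrix.dotProduct_mulVec, smul_eq_mul, smul_eq_mul, ← mul_assoc, ← sq,
      ← Matrix.mul_assoc]
  -- expectations of quadratic forms in u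
  have hEA : ∀ P : Matrix (Fin p) (Fin p) ℝ,
      ∫ ω, X ω ⬝ᵥ P *ᵥ X ω ∂μ = (S * P * S).trace := by
    intro P
    have h1 : ∫ ω, X ω ⬝ᵥ P *ᵥ X ω ∂μ
        = ∫ ω, R ω ^ 2 * (u ω ⬝ᵥ (S * P * S) *ᵥ u ω) ∂μ :=
      integral_congr_ae (Filter.Eventually.of_forall fun ω => hkey P ω)
    have hind : IndepFun (fun ω => R ω ^ 2) (fun ω => u ω ⬝ᵥ (S * P * S) *ᵥ u ω) μ :=
      hindep.symm.comp (measurable_id.pow_const 2) (meas_quad (S * P * S))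
    rw [h1, hind.integral_fun_mul_eq_mul_integral (hR.pow_const 2).aestronglyMeasurable
        ((meas_quad (S * P * S)).comp hu).aestronglyMeasurable,
      hR2, E_quad hu hurot husphere hp (S * P * S)]
    have hp0 : (p : ℝ) ≠ 0 := by positivity
    field_simp
  -- second moment
  have hM4 : ∫ ω, (X ω ⬝ᵥ A *ᵥ X ω) * (X ω ⬝ᵥ B *ᵥ X ω) ∂μ
      = (∫ ω, R ω ^ 4 ∂μ) * ((1 / (p * (p + 2)))
        * ((S * A * S).trace * (S * B * S).trace
          + (∑ i, ∑ j, (S * A * S) i j * (S * B * S) i j)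
          + ∑ i, ∑ j, (S * A * S) i j * (S * B * S) j i)) := by
    have h1 : ∫ ω, (X ω ⬝ᵥ A *ᵥ X ω) * (X ω ⬝ᵥ B *ᵥ X ω) ∂μ
        = ∫ ω, R ω ^ 4 * ((u ω ⬝ᵥ (S * A * S) *ᵥ u ω) * (u ω ⬝ᵥ (S * B * S) *ᵥ u ω)) ∂μ := by
      refine integral_congr_ae (Filter.Eventually.of_forall fun ω => ?_)
      show (X ω ⬝ᵥ A *ᵥ X ω) * (X ω ⬝ᵥ B *ᵥ X ω)
        = R ω ^ 4 * ((u ω ⬝ᵥ (S * A * S) *ᵥ u ω) * (u ω ⬝ᵥ (S * B * S) *ᵥ u ω))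
      rw [hkey A ω, hkey B ω]
      ring
    have hind : IndepFun (fun ω => R ω ^ 4)
        (fun ω => (u ω ⬝ᵥ (S * A * S) *ᵥ u ω) * (u ω ⬝ᵥ (S * B * S) *ᵥ u ω)) μ :=
      hindep.symm.comp (measurable_id.pow_const 4)
        ((meas_quad (S * A * S)).mul (meas_quad (S * B * S)))
    rw [h1, hind.integral_fun_mul_eq_mul_integral (hR.pow_const 4).aestronglyMeasurable
        (((meas_quad (S * A * S)).mul (meas_quad (S * B * S))).comp hu).aestronglyMeasurable,
      E_quad_mul hu hurot husphere hp (S * A * S) (S * B * S)]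
  -- matrix symmetry facts
  have hAt : Aᵀ = A := by
    rw [← Matrix.conjTranspose_eq_transpose_of_trivial]; exact hA
  have hBt : Bᵀ = B := by
    rw [← Matrix.conjTranspose_eq_transpose_of_trivial]; exact hB
  have hNt : (S * B * S)ᵀ = S * B * S := by
    rw [Matrix.transpose_mul, Matrix.transpose_mul, hSsymm, hBt, Matrix.mul_assoc]
  -- trace identities
  have htrM : (S * A * S).trace = (Sg * A).trace := by
    rw [Matrix.trace_mul_comm, ← Matrix.mul_assoc, hSS]
  have htrN : (S * B * S).trace = (Sg * B).trace := by
    rw [Matrix.trace_mul_comm, ← Matrix.mul_assoc, hSS]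
  have htrMN : ((S * A * S) * (S * B * S)).trace = (Sg * A * Sg * B).trace := by
    have e1 : (S * A * S) * (S * B * S) = S * (A * (Sg * (B * S))) := by
      rw [← hSS]; simp only [Matrix.mul_assoc]
    have e2 : A * (Sg * (B * S)) * S = A * (Sg * (B * Sg)) := by
      rw [← hSS]; simp only [Matrix.mul_assoc]
    have e3 : Sg * A * Sg * B = Sg * (A * (Sg * B)) := by simp only [Matrix.mul_assoc]
    have e4 : A * (Sg * B) * Sg = A * (Sg * (B * Sg)) := by simp only [Matrix.mul_assoc]
    calc ((S * A * S) * (S * B * S)).trace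
        = (S * (A * (Sg * (B * S)))).trace := by rw [e1]
      _ = ((A * (Sg * (B * S))) * S).trace := Matrix.trace_mul_comm _ _
      _ = (A * (Sg * (B * Sg))).trace := by rw [e2]
      _ = ((A * (Sg * B)) * Sg).trace := by rw [e4]
      _ = (Sg * (A * (Sg * B))).trace := (Matrix.trace_mul_comm _ _).symm
      _ = (Sg * A * Sg * B).trace := by rw [← e3]
  have hsum1 : (∑ i, ∑ j, (S * A * S) i j * (S * B * S) j i)
      = (Sg * A * Sg * B).trace := by
    rw [← htrMN]
    simp [Matrix.trace, Matrix.diag, Matrix.mul_apply]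
  have hsum2 : (∑ i, ∑ j, (S * A * S) i j * (S * B * S) i j)
      = (Sg * A * Sg * B).trace := by
    rw [← hsum1]
    refine Finset.sum_congr rfl fun i _ => Finset.sum_congr rfl fun j _ => ?_
    have := congrFun (congrFun hNt j) i
    rw [Matrix.transpose_apply] at this
    rw [← this]
  -- final algebra
  rw [hM4, hEA A, hEA B, htrM, htrN, hsum1, hsum2]
  have hp0 : (p : ℝ) ≠ 0 := by positivity
  have hp2 : ((p : ℝ) + 2) ≠ 0 := by positivity
  field_simp
  ring
end

section
/- Let p ≥ 1, let Σ be a positive definite p×p matrix, and let c be a real number with 0 < c < p. Then the p²×p² matrix (1/2)(Σ⊗Σ) − (c/(p(p+2)))·( Σ⊗Σ + (1/2)·vec(Σ)vec(Σ)ᵀ ) is positive definite. (This establishes the positive definiteness of the Hessian C of the t-loss risk, since 0 < E[ξ_R] < p; the proof identifies the eigenvalues of Q = (1/2)I_{p²} − (c/(p(p+2)))(I_{p²} + (1/2)vec(I_p)vec(I_p)ᵀ) as 1/2 − c/(p(p+2)) on the orthogonal complement of vec(I_p) and 1/2 − c/(2p) on the span of vec(I_p).) -/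
open Matrix
open scoped Kronecker

/-- Column-stacking vectorization of a `p × p` matrix, indexed by pairs. -/
noncomputable def mvec {p : ℕ} (A : Matrix (Fin p) (Fin p) ℝ) : Fin p × Fin p → ℝ :=
  fun ij => A ij.1 ij.2

/-- For `Σ` positive definite and `0 < c < p`, the `p²×p²` matrix
`(1/2)(Σ⊗Σ) − (c/(p(p+2)))·(Σ⊗Σ + (1/2)vec(Σ)vec(Σ)ᵀ)` is positive definite.
This gives the positive definiteness of the Hessian `C` of the `t`-loss risk,
since `0 < E[ξ_R] < p`. -/
theorem stmt11
    {p : ℕ} (hp : 1 ≤ p)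
    (Sg : Matrix (Fin p) (Fin p) ℝ) (hSg : Sg.PosDef)
    (c : ℝ) (hc0 : 0 < c) (hcp : c < p) :
    ((1 / 2 : ℝ) • (Sg ⊗ₖ Sg)
      - (c / (p * (p + 2))) • ((Sg ⊗ₖ Sg)
          + (1 / 2 : ℝ) • Matrix.vecMulVec (mvec Sg) (mvec Sg))).PosDef := by
  classical
  have hp1 : (1:ℝ) ≤ p := by exact_mod_cast hp
  have hp0 : (0:ℝ) < p := by linarith
  have hPS := hSg.posSemidef
  obtain ⟨S, hS2, hSH⟩ : ∃ S : Matrix (Fin p) (Fin p) ℝ, S * S = Sg ∧ S.IsHermitian := by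
    open scoped MatrixOrder in
    exact ⟨CFC.sqrt Sg, CFC.sqrt_mul_sqrt_self Sg hPS.nonneg, (CFC.sqrt_nonneg Sg).posSemidef.1⟩
  have hST : Sᵀ = S := by
    rw [← conjTranspose_eq_transpose_of_trivial]; exact hSH
  have hSgT : Sgᵀ = Sg := by
    rw [← conjTranspose_eq_transpose_of_trivial]; exact hSg.1
  have hs : ∀ a b, Sg b a = Sg a b := fun a b => congrFun (congrFun hSgT a) b
  have hsS : ∀ a b, S b a = S a b := fun a b => congrFun (congrFun hST a) b
  set K : Matrix (Fin p × Fin p) (Fin p × Fin p) ℝ := S ⊗ₖ S with hK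
  have hKT : Kᵀ = K := by
    rw [hK, ← kroneckerMap_transpose, hST]
  have hKK : K * K = Sg ⊗ₖ Sg := by
    rw [hK, ← Matrix.mul_kronecker_mul, hS2]
  have hdetS : S.det ≠ 0 := by
    intro h
    have : Sg.det = 0 := by rw [← hS2, det_mul, h, mul_zero]
    exact hSg.det_pos.ne' this
  have hdetK : K.det ≠ 0 := by
    rw [hK, det_kronecker]
    exact mul_ne_zero (pow_ne_zero _ hdetS) (pow_ne_zero _ hdetS)
  have hKinj : Function.Injective K.mulVec :=
    mulVec_injective_iff_isUnit.2 ((Matrix.isUnit_iff_isUnit_det K).2 hdetK.isUnit)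
  -- K applied to vec(I) gives vec(Sg)
  have hKvec : K *ᵥ mvec (1 : Matrix (Fin p) (Fin p) ℝ) = mvec Sg := by
    funext ij
    obtain ⟨i, j⟩ := ij
    have hSg_entry : Sg i j = ∑ k, S i k * S j k := by
      rw [← hS2, Matrix.mul_apply]
      exact Finset.sum_congr rfl fun k _ => by rw [hsS j k]
    simp only [Matrix.mulVec, dotProduct, Fintype.sum_prod_type, hK,
      kroneckerMap_apply, mvec, Matrix.one_apply, mul_ite, mul_one, mul_zero,
      Finset.sum_ite_eq, Finset.mem_univ, if_true]
    rw [hSg_entry]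
  -- self-adjointness of K
  have selfadj : ∀ v w : Fin p × Fin p → ℝ, v ⬝ᵥ (K *ᵥ w) = (K *ᵥ v) ⬝ᵥ w := by
    intro v w
    rw [dotProduct_mulVec, ← mulVec_transpose, hKT]
  -- Hermitian part
  have hherm : ((1 / 2 : ℝ) • (Sg ⊗ₖ Sg)
      - (c / (p * (p + 2))) • ((Sg ⊗ₖ Sg)
          + (1 / 2 : ℝ) • Matrix.vecMulVec (mvec Sg) (mvec Sg))).IsHermitian := by
    show _ᴴ = _
    ext ⟨i1, i2⟩ ⟨k1, k2⟩
    simp only [conjTranspose_apply, Matrix.sub_apply, Matrix.add_apply, Matrix.smul_apply,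
      kroneckerMap_apply, vecMulVec_apply, smul_eq_mul, mvec, star_trivial]
    rw [hs i1 k1, hs i2 k2]
    ring
  refine posDef_iff_dotProduct_mulVec.2 ⟨hherm, fun x hx => ?_⟩
  rw [star_trivial]
  have hy0 : K *ᵥ x ≠ 0 := by
    intro h
    exact hx (hKinj (h.trans (Matrix.mulVec_zero K).symm))
  have hQpos : 0 < (K *ᵥ x) ⬝ᵥ (K *ᵥ x) :=
    lt_of_le_of_ne (Finset.sum_nonneg fun i _ => mul_self_nonneg _)
      (fun h => hy0 (dotProduct_self_eq_zero.mp h.symm))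
  have hQeq : x ⬝ᵥ ((Sg ⊗ₖ Sg) *ᵥ x) = (K *ᵥ x) ⬝ᵥ (K *ᵥ x) := by
    rw [← hKK, ← Matrix.mulVec_mulVec, selfadj]
  have hDeq : mvec Sg ⬝ᵥ x = mvec (1 : Matrix (Fin p) (Fin p) ℝ) ⬝ᵥ (K *ᵥ x) := by
    rw [selfadj _ x, hKvec]
  have hvmv : x ⬝ᵥ (Matrix.vecMulVec (mvec Sg) (mvec Sg) *ᵥ x)
      = (mvec Sg ⬝ᵥ x) ^ 2 := by
    simp only [Matrix.mulVec, Matrix.vecMulVec_apply, dotProduct, pow_two,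
      Finset.mul_sum, Finset.sum_mul]
    rw [Finset.sum_comm]
    refine Finset.sum_congr rfl fun i _ => Finset.sum_congr rfl fun j _ => by ring
  -- Cauchy-Schwarz
  have hIsum : ∑ ij : Fin p × Fin p, (mvec (1 : Matrix (Fin p) (Fin p) ℝ) ij) ^ 2 = p := by
    simp only [mvec, Matrix.one_apply, apply_ite (fun r : ℝ => r ^ 2), one_pow]
    rw [Fintype.sum_prod_type]
    simp [Finset.sum_ite_eq]
  have hCS : (mvec (1 : Matrix (Fin p) (Fin p) ℝ) ⬝ᵥ (K *ᵥ x)) ^ 2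
      ≤ p * ((K *ᵥ x) ⬝ᵥ (K *ᵥ x)) := by
    have h := Finset.sum_mul_sq_le_sq_mul_sq Finset.univ
      (mvec (1 : Matrix (Fin p) (Fin p) ℝ)) (K *ᵥ x)
    have hyy : (K *ᵥ x) ⬝ᵥ (K *ᵥ x) = ∑ i, (K *ᵥ x) i ^ 2 := by
      simp [dotProduct, pow_two]
    rw [hyy]
    calc (mvec (1 : Matrix (Fin p) (Fin p) ℝ) ⬝ᵥ (K *ᵥ x)) ^ 2
        = (∑ i, mvec (1 : Matrix (Fin p) (Fin p) ℝ) i * (K *ᵥ x) i) ^ 2 := rfl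
      _ ≤ (∑ i, (mvec (1 : Matrix (Fin p) (Fin p) ℝ) i) ^ 2) * ∑ i, (K *ᵥ x) i ^ 2 := h
      _ = p * ∑ i, (K *ᵥ x) i ^ 2 := by rw [hIsum]
  simp only [Matrix.sub_mulVec, Matrix.add_mulVec, Matrix.smul_mulVec,
    dotProduct_sub, dotProduct_add, dotProduct_smul, smul_eq_mul]
  rw [hQeq, hvmv, hDeq]
  set Q : ℝ := (K *ᵥ x) ⬝ᵥ (K *ᵥ x) with hQdef
  set D : ℝ := mvec (1 : Matrix (Fin p) (Fin p) ℝ) ⬝ᵥ (K *ᵥ x) with hDdef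
  have hden : (0:ℝ) < (p:ℝ) * ((p:ℝ) + 2) := by positivity
  have h1 : c / ((p:ℝ) * ((p:ℝ) + 2)) * (1 / 2 * D ^ 2)
      ≤ c / ((p:ℝ) * ((p:ℝ) + 2)) * (1 / 2 * ((p:ℝ) * Q)) := by
    have : (1:ℝ) / 2 * D ^ 2 ≤ 1 / 2 * ((p:ℝ) * Q) := by linarith
    exact mul_le_mul_of_nonneg_left this (by positivity)
  have hcoef : (1:ℝ) / 2 - c / ((p:ℝ) * ((p:ℝ) + 2))
      - c / ((p:ℝ) * ((p:ℝ) + 2)) * (p:ℝ) / 2 = ((p:ℝ) - c) / (2 * (p:ℝ)) := by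
    field_simp
    ring
  have key : 0 < ((1:ℝ) / 2 - c / ((p:ℝ) * ((p:ℝ) + 2))
      - c / ((p:ℝ) * ((p:ℝ) + 2)) * (p:ℝ) / 2) * Q := by
    rw [hcoef]
    have hpc : (0:ℝ) < (p:ℝ) - c := by linarith
    positivity
  have expand : 1 / 2 * Q - c / ((p:ℝ) * ((p:ℝ) + 2)) * (Q + 1 / 2 * D ^ 2)
      = ((1:ℝ) / 2 - c / ((p:ℝ) * ((p:ℝ) + 2))
          - c / ((p:ℝ) * ((p:ℝ) + 2)) * (p:ℝ) / 2) * Q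
        + c / ((p:ℝ) * ((p:ℝ) + 2)) * (1 / 2 * ((p:ℝ) * Q))
        - c / ((p:ℝ) * ((p:ℝ) + 2)) * (1 / 2 * D ^ 2) := by ring
  linarith [key, h1, expand.ge, expand.le]
end

section
/- Let p ≥ 1, ν > 0, let Θ₀ be a positive definite p×p matrix, and let X = Θ₀^{−1/2} u R, where u is uniformly distributed on the unit sphere S^{p−1} ⊂ ℝ^p and R ≥ 0 is independent of u. Then E[ XXᵀ/(ν + XᵀΘ₀X) ] = (1/p)·E[R²/(ν+R²)]·Θ₀^{−1}, and consequently the expected t-loss score vanishes at Θ₀, i.e., E[ −(1/2)Θ₀^{−1} + ((ν+p)/2)·XXᵀ/(ν + XᵀΘ₀X) ] = 0, if and only if E[R²/(ν+R²)] = p/(ν+p). -/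
open MeasureTheory ProbabilityTheory Matrix

noncomputable def Matrix.PosSemidef.sqrt {n 𝕜 : Type*} [Fintype n] [DecidableEq n] [RCLike 𝕜]
    [PartialOrder 𝕜] {A : Matrix n n 𝕜} (hA : A.PosSemidef) : Matrix n n 𝕜 :=
  hA.1.eigenvectorUnitary.1 * diagonal ((↑) ∘ Real.sqrt ∘ hA.1.eigenvalues) *
    (star hA.1.eigenvectorUnitary : Matrix n n 𝕜)

lemma Matrix.PosSemidef.sqrt_mul_self {p : ℕ} {A : Matrix (Fin p) (Fin p) ℝ} (hA : A.PosSemidef) :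
    hA.sqrt * hA.sqrt = A := by
  have hU : star (hA.1.eigenvectorUnitary : Matrix (Fin p) (Fin p) ℝ) *
      (hA.1.eigenvectorUnitary : Matrix (Fin p) (Fin p) ℝ) = 1 :=
    Unitary.star_mul_self_of_mem hA.1.eigenvectorUnitary.2
  have hspec := hA.1.spectral_theorem
  rw [Unitary.conjStarAlgAut_apply] at hspec
  conv_rhs => rw [hspec]
  unfold Matrix.PosSemidef.sqrt
  calc _ = (hA.1.eigenvectorUnitary : Matrix (Fin p) (Fin p) ℝ) *
        (diagonal (RCLike.ofReal ∘ Real.sqrt ∘ hA.1.eigenvalues : Fin p → ℝ) *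
        (star (hA.1.eigenvectorUnitary : Matrix (Fin p) (Fin p) ℝ) *
          (hA.1.eigenvectorUnitary : Matrix (Fin p) (Fin p) ℝ)) *
        diagonal (RCLike.ofReal ∘ Real.sqrt ∘ hA.1.eigenvalues : Fin p → ℝ)) *
        star (hA.1.eigenvectorUnitary : Matrix (Fin p) (Fin p) ℝ) := by
          simp only [Matrix.mul_assoc]
    _ = _ := by
      rw [hU, Matrix.mul_one, diagonal_mul_diagonal]
      congr 3; funext k
      simp [Real.mul_self_sqrt (hA.eigenvalues_nonneg k)]

lemma Matrix.PosSemidef.sqrt_transpose {p : ℕ} {A : Matrix (Fin p) (Fin p) ℝ} (hA : A.PosSemidef) :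
    hA.sqrtᵀ = hA.sqrt := by
  unfold Matrix.PosSemidef.sqrt
  simp [Matrix.transpose_mul, Matrix.star_eq_conjTranspose, Matrix.mul_assoc,
    Matrix.conjTranspose_eq_transpose_of_trivial]

lemma sphere_moment'
    {Ω : Type*} [MeasurableSpace Ω] (μ : Measure Ω) [IsProbabilityMeasure μ]
    {p : ℕ}
    (u : Ω → Fin p → ℝ) (hu : Measurable u)
    (husphere : ∀ᵐ ω ∂μ, ∑ i, (u ω i) ^ 2 = 1)
    (hurot : ∀ O : Matrix.orthogonalGroup (Fin p) ℝ,
      Measure.map (fun ω => (O : Matrix (Fin p) (Fin p) ℝ) *ᵥ u ω) μ = Measure.map u μ)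
    (i j : Fin p) :
    ∫ ω, u ω i * u ω j ∂μ = if i = j then (1 / p : ℝ) else 0 := by
  have humeas : ∀ k : Fin p, Measurable (fun ω => u ω k) :=
    fun k => (measurable_pi_apply k).comp hu
  have hbd : ∀ᵐ ω ∂μ, ∀ k : Fin p, |u ω k| ≤ 1 := by
    filter_upwards [husphere] with ω hω k
    rw [abs_le_one_iff_mul_self_le_one]
    have : (u ω k) ^ 2 ≤ 1 := by
      rw [← hω]
      exact Finset.single_le_sum (fun l _ => sq_nonneg (u ω l)) (Finset.mem_univ k)
    nlinarith
  have hint : ∀ k l : Fin p, Integrable (fun ω => u ω k * u ω l) μ := by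
    intro k l
    refine Integrable.mono' (integrable_const 1) ((humeas k).mul (humeas l)).aestronglyMeasurable ?_
    filter_upwards [hbd] with ω hω
    calc ‖u ω k * u ω l‖ = |u ω k| * |u ω l| := abs_mul _ _
    _ ≤ 1 * 1 := mul_le_mul (hω k) (hω l) (abs_nonneg _) zero_le_one
    _ = 1 := by ring
  -- transfer along an orthogonal matrix
  have htrans : ∀ (O : Matrix (Fin p) (Fin p) ℝ) (_ : O ∈ Matrix.orthogonalGroup (Fin p) ℝ)
      (k l : Fin p),
      ∫ ω, (O *ᵥ u ω) k * (O *ᵥ u ω) l ∂μ = ∫ ω, u ω k * u ω l ∂μ := by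
    intro O hO k l
    have hmulmeas : Measurable (fun ω => O *ᵥ u ω) := by
      apply measurable_pi_iff.2
      intro a
      simp only [Matrix.mulVec, dotProduct]
      exact Finset.measurable_sum _ fun b _ => (humeas b).const_mul _
    have hf : Measurable (fun v : Fin p → ℝ => v k * v l) :=
      (measurable_pi_apply k).mul (measurable_pi_apply l)
    calc ∫ ω, (O *ᵥ u ω) k * (O *ᵥ u ω) l ∂μ
        = ∫ v, v k * v l ∂(Measure.map (fun ω => O *ᵥ u ω) μ) :=
          (integral_map hmulmeas.aemeasurable hf.aestronglyMeasurable).symm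
      _ = ∫ v, v k * v l ∂(Measure.map u μ) := by rw [hurot ⟨O, hO⟩]
      _ = ∫ ω, u ω k * u ω l ∂μ := integral_map hu.aemeasurable hf.aestronglyMeasurable
  -- off-diagonal vanishes
  have hoff : ∀ k l : Fin p, k ≠ l → ∫ ω, u ω k * u ω l ∂μ = 0 := by
    intro k l hkl
    set O := Matrix.diagonal (fun m => if m = l then (-1:ℝ) else 1) with hOdef
    have hO : O ∈ Matrix.orthogonalGroup (Fin p) ℝ := by
      rw [Matrix.mem_orthogonalGroup_iff]
      ext a b
      simp [hOdef, Matrix.star_eq_conjTranspose, Matrix.diagonal_conjTranspose,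
        Matrix.diagonal_mul_diagonal, Matrix.diagonal_apply, Matrix.one_apply]
      split <;> simp_all; split <;> norm_num
    have h1 := htrans O hO k l
    have h2 : ∀ ω, (O *ᵥ u ω) k * (O *ᵥ u ω) l = -(u ω k * u ω l) := by
      intro ω
      have ha : ∀ a, (O *ᵥ u ω) a = (if a = l then -1 else 1) * u ω a := by
        intro a; simp [hOdef, Matrix.mulVec_diagonal]
      rw [ha k, ha l, if_pos rfl, if_neg hkl]
      ring
    simp only [h2, integral_neg] at h1
    linarith
  -- diagonal entries are all equal
  have hswap : ∀ k l : Fin p, ∫ ω, u ω k * u ω k ∂μ = ∫ ω, u ω l * u ω l ∂μ := by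
    intro k l
    set σ := Equiv.swap k l with hσ
    set O := (Matrix.of fun a b => if σ a = b then (1:ℝ) else 0) with hOdef
    have hO : O ∈ Matrix.orthogonalGroup (Fin p) ℝ := by
      rw [Matrix.mem_orthogonalGroup_iff]
      ext a b
      simp [hOdef, Matrix.mul_apply, Matrix.star_eq_conjTranspose, Matrix.conjTranspose_apply,
        Matrix.one_apply, ite_and]
    have h1 := htrans O hO k k
    have h2 : ∀ ω, (O *ᵥ u ω) k * (O *ᵥ u ω) k = u ω l * u ω l := by
      intro ω
      have ha : ∀ a, (O *ᵥ u ω) a = u ω (σ a) := by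
        intro a; simp [hOdef, Matrix.mulVec, dotProduct]
      rw [ha k, hσ, Equiv.swap_apply_left]
    simp only [h2] at h1
    exact h1.symm
  -- diagonal sum is one
  have hsum : ∑ k : Fin p, ∫ ω, u ω k * u ω k ∂μ = 1 := by
    rw [← integral_finset_sum _ (fun k _ => hint k k)]
    have : ∫ ω, ∑ k : Fin p, u ω k * u ω k ∂μ = ∫ (_ : Ω), (1:ℝ) ∂μ := by
      apply integral_congr_ae
      filter_upwards [husphere] with ω hω
      simpa [pow_two] using hω
    simp [this]
  by_cases h : i = j
  · subst h
    have hp0 : (p : ℝ) ≠ 0 := by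
      have : 0 < p := Fin.pos i
      exact_mod_cast this.ne'
    have : ∑ k : Fin p, ∫ ω, u ω k * u ω k ∂μ = p * ∫ ω, u ω i * u ω i ∂μ := by
      rw [Finset.sum_congr rfl (fun k _ => hswap k i)]
      simp [mul_comm]
    rw [this] at hsum
    rw [if_pos rfl]
    field_simp
    simp only [← pow_two] at hsum
    linarith
  · rw [if_neg h]; exact hoff i j h

/-- Let `X = Θ₀^{−1/2} u R` be elliptical (`u` uniform on the sphere,
`R ≥ 0` independent of `u`), `ν > 0`. Then
`E[XXᵀ/(ν+XᵀΘ₀X)] = (1/p)·E[R²/(ν+R²)]·Θ₀⁻¹`, and the expected `t`-loss score vanishes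
at `Θ₀` if and only if `E[R²/(ν+R²)] = p/(ν+p)`. -/
theorem stmt13
    {Ω : Type*} [MeasurableSpace Ω] (μ : Measure Ω) [IsProbabilityMeasure μ]
    {p : ℕ} (hp : 1 ≤ p) (ν : ℝ) (hν : 0 < ν)
    (Θ₀ : Matrix (Fin p) (Fin p) ℝ) (hΘ₀ : Θ₀.PosDef)
    (u : Ω → Fin p → ℝ) (hu : Measurable u)
    (husphere : ∀ᵐ ω ∂μ, ∑ i, (u ω i) ^ 2 = 1)
    (hurot : ∀ O : Matrix.orthogonalGroup (Fin p) ℝ,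
      Measure.map (fun ω => (O : Matrix (Fin p) (Fin p) ℝ) *ᵥ u ω) μ = Measure.map u μ)
    (R : Ω → ℝ) (hR : Measurable R) (hRpos : ∀ ω, 0 ≤ R ω)
    (hindep : IndepFun u R μ)
    (X : Ω → Fin p → ℝ)
    (hXdef : ∀ ω, X ω = R ω • (hΘ₀.inv.posSemidef.sqrt *ᵥ u ω)) :
    (∀ i j, ∫ ω, X ω i * X ω j / (ν + X ω ⬝ᵥ Θ₀ *ᵥ X ω) ∂μ
        = (1 / p : ℝ) * (∫ ω, (R ω) ^ 2 / (ν + (R ω) ^ 2) ∂μ) * Θ₀⁻¹ i j) ∧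
    ((∀ i j, ∫ ω, -(1 / 2 : ℝ) * Θ₀⁻¹ i j
          + ((ν + p) / 2) * (X ω i * X ω j) / (ν + X ω ⬝ᵥ Θ₀ *ᵥ X ω) ∂μ = 0)
      ↔ ∫ ω, (R ω) ^ 2 / (ν + (R ω) ^ 2) ∂μ = p / (ν + p)) := by
  have hp0 : (p : ℝ) ≠ 0 := by positivity
  have hpR : (0:ℝ) < p := by exact_mod_cast hp
  have hνp : (0:ℝ) < ν + p := by linarith
  set S := hΘ₀.inv.posSemidef.sqrt with hSdef
  have hSS : S * S = Θ₀⁻¹ := hΘ₀.inv.posSemidef.sqrt_mul_self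
  have hsym : Sᵀ = S := by
    exact hΘ₀.inv.posSemidef.sqrt_transpose
  have hsym' : ∀ a b, S a b = S b a := by
    intro a b
    conv_lhs => rw [← hsym]
    rfl
  have hSΘS : S * Θ₀ * S = 1 := by
    have hdet : IsUnit S.det := by
      have h1 : S.det * S.det = (Θ₀⁻¹).det := by rw [← Matrix.det_mul, hSS]
      have : S.det ≠ 0 := by
        intro h; rw [h] at h1; simp at h1
        have := hΘ₀.det_pos
        linarith
      exact this.isUnit
    have hΘeq : Θ₀ = S⁻¹ * S⁻¹ := by
      have h0 : Θ₀⁻¹⁻¹ = Θ₀ := Matrix.nonsing_inv_nonsing_inv Θ₀ hΘ₀.det_pos.ne'.isUnit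
      rw [← h0, ← hSS, Matrix.mul_inv_rev]
    calc S * Θ₀ * S = S * (S⁻¹ * S⁻¹) * S := by rw [← hΘeq]
      _ = (S * S⁻¹) * (S⁻¹ * S) := by simp only [Matrix.mul_assoc]
      _ = 1 := by rw [Matrix.mul_nonsing_inv _ hdet, Matrix.nonsing_inv_mul _ hdet, one_mul]
  have humeas : ∀ k : Fin p, Measurable (fun ω => u ω k) :=
    fun k => (measurable_pi_apply k).comp hu
  have moment := sphere_moment' μ u hu husphere hurot
  -- integrability of products of coordinates of u
  have hbd : ∀ᵐ ω ∂μ, ∀ k : Fin p, |u ω k| ≤ 1 := by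
    filter_upwards [husphere] with ω hω k
    rw [abs_le_one_iff_mul_self_le_one]
    have : (u ω k) ^ 2 ≤ 1 := by
      rw [← hω]
      exact Finset.single_le_sum (fun l _ => sq_nonneg (u ω l)) (Finset.mem_univ k)
    nlinarith
  have hintuu : ∀ k l : Fin p, Integrable (fun ω => u ω k * u ω l) μ := by
    intro k l
    refine Integrable.mono' (integrable_const 1) ((humeas k).mul (humeas l)).aestronglyMeasurable ?_
    filter_upwards [hbd] with ω hω
    calc ‖u ω k * u ω l‖ = |u ω k| * |u ω l| := abs_mul _ _
      _ ≤ 1 * 1 := mul_le_mul (hω k) (hω l) (abs_nonneg _) zero_le_one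
      _ = 1 := by ring
  -- the quadratic form
  have hq : ∀ ω, X ω ⬝ᵥ Θ₀ *ᵥ X ω = (R ω) ^ 2 * (u ω ⬝ᵥ u ω) := by
    intro ω
    rw [hXdef]
    have base : (S *ᵥ u ω) ⬝ᵥ Θ₀ *ᵥ (S *ᵥ u ω) = u ω ⬝ᵥ u ω := by
      calc (S *ᵥ u ω) ⬝ᵥ Θ₀ *ᵥ (S *ᵥ u ω)
          = (u ω ᵥ* S) ⬝ᵥ ((Θ₀ * S) *ᵥ u ω) := by
            rw [Matrix.mulVec_mulVec, ← Matrix.mulVec_transpose, hsym]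
        _ = u ω ⬝ᵥ (S *ᵥ ((Θ₀ * S) *ᵥ u ω)) := (dotProduct_mulVec _ _ _).symm
        _ = u ω ⬝ᵥ ((S * Θ₀ * S) *ᵥ u ω) := by rw [Matrix.mulVec_mulVec, Matrix.mul_assoc]
        _ = u ω ⬝ᵥ u ω := by rw [hSΘS, Matrix.one_mulVec]
    rw [Matrix.mulVec_smul, smul_dotProduct, dotProduct_smul, base]
    simp [smul_eq_mul]
    ring
  have hXi : ∀ ω (k : Fin p), X ω k = R ω * (S *ᵥ u ω) k := by
    intro ω k
    rw [hXdef]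
    simp [smul_eq_mul]
  -- f and g
  set f : ℝ → ℝ := fun r => r ^ 2 / (ν + r ^ 2) with hfdef
  have hfmeas : Measurable f :=
    (measurable_id.pow_const 2).div (measurable_const.add (measurable_id.pow_const 2))
  have hfbd : ∀ r : ℝ, ‖f r‖ ≤ 1 := by
    intro r
    have h1 : 0 < ν + r ^ 2 := by positivity
    rw [Real.norm_eq_abs, abs_of_nonneg (by positivity)]
    rw [div_le_one h1]
    linarith
  set E := ∫ ω, (R ω) ^ 2 / (ν + (R ω) ^ 2) ∂μ with hEdef
  have hgmeas : ∀ i : Fin p, Measurable (fun v : Fin p → ℝ => (S *ᵥ v) i) := by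
    intro i
    simp only [Matrix.mulVec, dotProduct]
    exact Finset.measurable_sum _ fun k _ => (measurable_pi_apply k).const_mul _
  -- the main integral computation
  have part1 : ∀ i j : Fin p,
      (∫ ω, X ω i * X ω j / (ν + X ω ⬝ᵥ Θ₀ *ᵥ X ω) ∂μ = (1 / p : ℝ) * E * Θ₀⁻¹ i j) ∧
      Integrable (fun ω => X ω i * X ω j / (ν + X ω ⬝ᵥ Θ₀ *ᵥ X ω)) μ := by
    intro i j
    set g : (Fin p → ℝ) → ℝ := fun v => (S *ᵥ v) i * (S *ᵥ v) j with hgdef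
    have hgm : Measurable g := (hgmeas i).mul (hgmeas j)
    have hae : ∀ᵐ ω ∂μ, X ω i * X ω j / (ν + X ω ⬝ᵥ Θ₀ *ᵥ X ω) = f (R ω) * g (u ω) := by
      filter_upwards [husphere] with ω hω
      have hdot : u ω ⬝ᵥ u ω = 1 := by
        simpa [dotProduct, pow_two] using hω
      rw [hXi ω i, hXi ω j, hq ω, hdot, mul_one]
      simp only [hfdef, hgdef]
      ring
    -- integrability of f(R)·g(u)
    have hgbd : ∀ᵐ ω ∂μ, ‖g (u ω)‖ ≤ (∑ k, |S i k|) * (∑ k, |S j k|) := by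
      filter_upwards [hbd] with ω hω
      have hcoord : ∀ a : Fin p, |(S *ᵥ u ω) a| ≤ ∑ k, |S a k| := by
        intro a
        calc |(S *ᵥ u ω) a| = |∑ k, S a k * u ω k| := by
              simp [Matrix.mulVec, dotProduct]
          _ ≤ ∑ k, |S a k * u ω k| := Finset.abs_sum_le_sum_abs _ _
          _ ≤ ∑ k, |S a k| := by
              apply Finset.sum_le_sum
              intro k _
              rw [abs_mul]
              calc |S a k| * |u ω k| ≤ |S a k| * 1 :=
                    mul_le_mul_of_nonneg_left (hω k) (abs_nonneg _)
                _ = |S a k| := mul_one _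
      calc ‖g (u ω)‖ = |(S *ᵥ u ω) i| * |(S *ᵥ u ω) j| := abs_mul _ _
        _ ≤ (∑ k, |S i k|) * (∑ k, |S j k|) :=
            mul_le_mul (hcoord i) (hcoord j) (abs_nonneg _)
              (Finset.sum_nonneg fun _ _ => abs_nonneg _)
    have hIfg : Integrable (fun ω => f (R ω) * g (u ω)) μ := by
      refine Integrable.mono'
        (integrable_const ((∑ k, |S i k|) * (∑ k, |S j k|)))
        (((hfmeas.comp hR).mul (hgm.comp hu)).aestronglyMeasurable) ?_
      filter_upwards [hgbd] with ω hω
      calc ‖f (R ω) * g (u ω)‖ = ‖f (R ω)‖ * ‖g (u ω)‖ := norm_mul _ _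
        _ ≤ 1 * ((∑ k, |S i k|) * (∑ k, |S j k|)) := by
            apply mul_le_mul (hfbd _) hω (norm_nonneg _)
            norm_num
        _ = (∑ k, |S i k|) * (∑ k, |S j k|) := one_mul _
    have hIX : Integrable (fun ω => X ω i * X ω j / (ν + X ω ⬝ᵥ Θ₀ *ᵥ X ω)) μ :=
      hIfg.congr (Filter.EventuallyEq.symm hae)
    refine ⟨?_, hIX⟩
    rw [integral_congr_ae hae]
    have hmulcomm : (fun ω => f (R ω) * g (u ω)) = fun ω => g (u ω) * f (R ω) := by
      funext ω; ring
    rw [hmulcomm]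
    have hindep' : IndepFun (fun ω => g (u ω)) (fun ω => f (R ω)) μ :=
      hindep.comp hgm hfmeas
    have hmul := hindep'.integral_mul_eq_mul_integral ((hgm.comp hu).aestronglyMeasurable)
      ((hfmeas.comp hR).aestronglyMeasurable)
    rw [show (∫ ω, g (u ω) * f (R ω) ∂μ)
        = integral μ ((fun ω => g (u ω)) * fun ω => f (R ω)) from rfl, hmul]
    -- compute ∫ g(u)
    have hgu : (fun ω => g (u ω))
        = fun ω => ∑ k, ∑ l, (S i k * S j l) * (u ω k * u ω l) := by
      funext ω
      simp only [hgdef, Matrix.mulVec, dotProduct, Finset.sum_mul_sum]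
      apply Finset.sum_congr rfl; intro k _
      apply Finset.sum_congr rfl; intro l _
      ring
    have hEg : ∫ ω, g (u ω) ∂μ = (1 / p : ℝ) * Θ₀⁻¹ i j := by
      rw [hgu]
      rw [integral_finset_sum _ (fun k _ =>
        integrable_finset_sum _ (fun l _ => (hintuu k l).const_mul _))]
      have : ∀ k : Fin p, ∫ ω, ∑ l, (S i k * S j l) * (u ω k * u ω l) ∂μ
          = S i k * S j k * (1 / p : ℝ) := by
        intro k
        rw [integral_finset_sum _ (fun l _ => (hintuu k l).const_mul _)]
        have : ∀ l : Fin p, ∫ ω, (S i k * S j l) * (u ω k * u ω l) ∂μ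
            = (S i k * S j l) * (if k = l then (1 / p : ℝ) else 0) := by
          intro l
          rw [integral_const_mul, moment k l]
        simp only [this, mul_ite, mul_zero]
        simp [Finset.sum_ite_eq]
      rw [Finset.sum_congr rfl (fun k _ => this k)]
      have hentry : ∑ k, S i k * S j k = Θ₀⁻¹ i j := by
        rw [← hSS, Matrix.mul_apply]
        apply Finset.sum_congr rfl
        intro k _
        rw [hsym' j k]
      rw [← Finset.sum_mul, hentry]
      ring
    rw [hEg, ← hEdef]
    ring
  refine ⟨fun i j => (part1 i j).1, ?_⟩
  -- second part
  have key : ∀ i j : Fin p,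
      ∫ ω, -(1 / 2 : ℝ) * Θ₀⁻¹ i j
          + ((ν + p) / 2) * (X ω i * X ω j) / (ν + X ω ⬝ᵥ Θ₀ *ᵥ X ω) ∂μ
        = -(1 / 2 : ℝ) * Θ₀⁻¹ i j + ((ν + p) / 2) * ((1 / p : ℝ) * E * Θ₀⁻¹ i j) := by
    intro i j
    have hrw : (fun ω => -(1 / 2 : ℝ) * Θ₀⁻¹ i j
        + ((ν + p) / 2) * (X ω i * X ω j) / (ν + X ω ⬝ᵥ Θ₀ *ᵥ X ω))
        = fun ω => -(1 / 2 : ℝ) * Θ₀⁻¹ i j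
        + ((ν + p) / 2) * (X ω i * X ω j / (ν + X ω ⬝ᵥ Θ₀ *ᵥ X ω)) := by
      funext ω; rw [mul_div_assoc]
    have h2 : ∫ ω, ((ν + (p:ℝ)) / 2) * (X ω i * X ω j / (ν + X ω ⬝ᵥ Θ₀ *ᵥ X ω)) ∂μ
        = ((ν + (p:ℝ)) / 2) * ((1 / p : ℝ) * E * Θ₀⁻¹ i j) := by
      rw [integral_const_mul, (part1 i j).1]
    rw [hrw, integral_add (integrable_const _) ((part1 i j).2.const_mul _), h2,
      integral_const, probReal_univ]
    simp
  constructor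
  · intro h
    set i0 : Fin p := ⟨0, hp⟩ with hi0
    have hc : 0 < Θ₀⁻¹ i0 i0 := by
      have hne : (Pi.single i0 1 : Fin p → ℝ) ≠ 0 := by
        intro hcon
        have := congrFun hcon i0
        simp at this
      have := hΘ₀.inv.dotProduct_mulVec_pos hne
      simpa [dotProduct_single, Matrix.mulVec_single] using this
    have h0 := h i0 i0
    rw [key i0 i0] at h0
    have h2 : Θ₀⁻¹ i0 i0 * (((ν + p) / 2) * ((1 / p : ℝ) * E) - 1 / 2) = 0 := by
      linear_combination h0
    rcases mul_eq_zero.1 h2 with h3 | h3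
    · exact absurd h3 hc.ne'
    · have : ((ν + p) / 2) * ((1 / p : ℝ) * E) = 1 / 2 := by linarith
      field_simp at this
      rw [hEdef] at this ⊢
      field_simp
      linarith
  · intro hE i j
    rw [key i j, ← hEdef] at *
    rw [hE]
    field_simp
    ring
end

section
/- Let p ≥ 1, ν ≥ 1, n ≥ 1, let x₁,…,x_n ∈ ℝ^p, let δ > 0, and let Θ be a positive definite p×p matrix with largest eigenvalue λ₁ and a unit eigenvector v₁ satisfying Θv₁ = λ₁v₁ and ‖v₁‖ = 1. Set S := (1/n)·#{ i ∈ {1,…,n} : |v₁ᵀx_i| ≥ δ }. Then −(1/2)·log det Θ + ((ν+p)/(2n))·Σ_{i=1}^n log(ν + x_iᵀΘx_i) ≥ ( ((ν+p)/2)·S − p/2 )·log λ₁ + ((ν+p)/2)·S·log(δ²). -/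
open Matrix

/-- Deterministic coercivity inequality for the empirical `t`-loss:
if `Θ` is positive definite with largest eigenvalue `λ₁` (characterized by the Rayleigh
bound) and unit eigenvector `v₁`, `δ > 0`, and
`S = (1/n)·#{i : |v₁ᵀx_i| ≥ δ}`, then
`−(1/2)log det Θ + ((ν+p)/(2n))·Σᵢ log(ν + xᵢᵀΘxᵢ)
  ≥ (((ν+p)/2)·S − p/2)·log λ₁ + ((ν+p)/2)·S·log(δ²)`. -/
theorem stmt18
    {p n : ℕ} (hp : 1 ≤ p) (hn : 1 ≤ n) (ν : ℝ) (hν : 1 ≤ ν)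
    (x : Fin n → Fin p → ℝ) (δ : ℝ) (hδ : 0 < δ)
    (Θ : Matrix (Fin p) (Fin p) ℝ) (hΘ : Θ.PosDef)
    (lam1 : ℝ) (v1 : Fin p → ℝ)
    (heig : Θ *ᵥ v1 = lam1 • v1) (hunit : ∑ i, (v1 i) ^ 2 = 1)
    (hmax : ∀ y : Fin p → ℝ, y ⬝ᵥ Θ *ᵥ y ≤ lam1 * (y ⬝ᵥ y)) :
    -(1 / 2 : ℝ) * Real.log Θ.det
        + ((ν + p) / (2 * n)) * ∑ i, Real.log (ν + x i ⬝ᵥ Θ *ᵥ x i)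
      ≥ (((ν + p) / 2) * (((Finset.univ.filter fun i : Fin n => δ ≤ |v1 ⬝ᵥ x i|).card : ℝ) / n)
            - p / 2) * Real.log lam1
        + ((ν + p) / 2) * (((Finset.univ.filter fun i : Fin n => δ ≤ |v1 ⬝ᵥ x i|).card : ℝ) / n)
            * Real.log (δ ^ 2) := by
  classical
  have hA := hΘ.isHermitian
  -- v1 ⬝ v1 = 1
  have hv1 : v1 ⬝ᵥ v1 = 1 := by
    simpa [dotProduct, sq] using hunit
  have hv1ne : v1 ≠ 0 := by
    intro h
    rw [h] at hv1
    simp at hv1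
  -- lam1 > 0
  have hlam : 0 < lam1 := by
    have := hΘ.dotProduct_mulVec_pos hv1ne
    simp only [star_trivial] at this
    rw [heig] at this
    simpa [dotProduct_smul, hv1] using this
  -- det ≤ lam1^p
  have heval : ∀ j, hA.eigenvalues j ≤ lam1 := by
    intro j
    have hb := hA.mulVec_eigenvectorBasis j
    set u : Fin p → ℝ := ⇑(hA.eigenvectorBasis j) with hu
    have hnorm : u ⬝ᵥ u = 1 := by
      have h2 : (inner ℝ (hA.eigenvectorBasis j) (hA.eigenvectorBasis j) : ℝ) = 1 := by
        rw [real_inner_self_eq_norm_sq, hA.eigenvectorBasis.orthonormal.1 j]; norm_num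
      rw [EuclideanSpace.inner_eq_star_dotProduct] at h2
      simpa [dotProduct, hu] using h2
    have := hmax u
    rw [hb] at this
    simp only [dotProduct_smul, smul_eq_mul, hnorm, mul_one] at this
    exact this
  have hdet : Θ.det ≤ lam1 ^ p := by
    rw [hA.det_eq_prod_eigenvalues]
    calc (∏ j, (hA.eigenvalues j : ℝ)) ≤ ∏ j : Fin p, lam1 :=
          Finset.prod_le_prod (fun j _ => (hΘ.eigenvalues_pos j).le) (fun j _ => heval j)
      _ = lam1 ^ p := by simp
  have hlogdet : Real.log Θ.det ≤ p * Real.log lam1 := by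
    calc Real.log Θ.det ≤ Real.log (lam1 ^ p) := Real.log_le_log hΘ.det_pos hdet
      _ = p * Real.log lam1 := by rw [Real.log_pow]
  -- quadratic form lower bound
  have hquad : ∀ i : Fin n, lam1 * (v1 ⬝ᵥ x i) ^ 2 ≤ x i ⬝ᵥ Θ *ᵥ x i := by
    intro i
    set α := v1 ⬝ᵥ x i with hα
    set w : Fin p → ℝ := x i - α • v1 with hw
    have hwx : x i = α • v1 + w := by rw [hw]; abel
    have hwv : w ⬝ᵥ v1 = 0 := by
      rw [hw]
      simp [sub_dotProduct, smul_dotProduct, hv1, dotProduct_comm v1 (x i), hα]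
    have hvw : v1 ⬝ᵥ w = 0 := by rw [dotProduct_comm]; exact hwv
    have hΘw : v1 ⬝ᵥ Θ *ᵥ w = 0 := by
      have : v1 ⬝ᵥ Θ *ᵥ w = (Θ *ᵥ v1) ⬝ᵥ w := by
        rw [dotProduct_mulVec, ← mulVec_transpose]
        have : Θᵀ = Θ := hA
        rw [this]
      rw [this, heig]
      simp [smul_dotProduct, hvw]
    have hwΘv : w ⬝ᵥ Θ *ᵥ v1 = 0 := by
      rw [heig]; simp [dotProduct_smul, hwv]
    have hvΘv : v1 ⬝ᵥ Θ *ᵥ v1 = lam1 := by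
      rw [heig]; simp [dotProduct_smul, hv1]
    have hwpos : 0 ≤ w ⬝ᵥ Θ *ᵥ w := by
      have := hΘ.posSemidef.dotProduct_mulVec_nonneg w
      simpa using this
    have hexp : x i ⬝ᵥ Θ *ᵥ x i = α ^ 2 * lam1 + w ⬝ᵥ Θ *ᵥ w := by
      rw [hwx]
      simp only [mulVec_add, mulVec_smul, add_dotProduct, dotProduct_add, smul_dotProduct,
        dotProduct_smul, smul_eq_mul, hΘw, hwΘv, hvΘv]
      ring
    rw [hexp]
    nlinarith [hwpos]
  -- per term log bound
  have hterm : ∀ i : Fin n,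
      (if δ ≤ |v1 ⬝ᵥ x i| then Real.log lam1 + Real.log (δ ^ 2) else 0)
        ≤ Real.log (ν + x i ⬝ᵥ Θ *ᵥ x i) := by
    intro i
    by_cases h : δ ≤ |v1 ⬝ᵥ x i|
    · simp only [h, if_true]
      have h1 : lam1 * δ ^ 2 ≤ ν + x i ⬝ᵥ Θ *ᵥ x i := by
        have h2 : δ ^ 2 ≤ (v1 ⬝ᵥ x i) ^ 2 := by
          have := sq_abs (v1 ⬝ᵥ x i)
          nlinarith [abs_nonneg (v1 ⬝ᵥ x i)]
        nlinarith [hquad i]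
      calc Real.log lam1 + Real.log (δ ^ 2) = Real.log (lam1 * δ ^ 2) := by
            rw [Real.log_mul (ne_of_gt hlam) (by positivity)]
        _ ≤ Real.log (ν + x i ⬝ᵥ Θ *ᵥ x i) := Real.log_le_log (by positivity) h1
    · simp only [h, if_false]
      apply Real.log_nonneg
      have := hquad i
      nlinarith [sq_nonneg (v1 ⬝ᵥ x i), hlam.le]
  -- sum bound
  set k : ℕ := (Finset.univ.filter fun i : Fin n => δ ≤ |v1 ⬝ᵥ x i|).card with hk
  have hsum : (k : ℝ) * (Real.log lam1 + Real.log (δ ^ 2))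
      ≤ ∑ i, Real.log (ν + x i ⬝ᵥ Θ *ᵥ x i) := by
    have := Finset.sum_le_sum (fun i (_ : i ∈ Finset.univ) => hterm i)
    calc (k : ℝ) * (Real.log lam1 + Real.log (δ ^ 2))
        = ∑ i : Fin n, (if δ ≤ |v1 ⬝ᵥ x i| then Real.log lam1 + Real.log (δ ^ 2) else 0) := by
          rw [Finset.sum_ite, Finset.sum_const, Finset.sum_const_zero, add_zero, nsmul_eq_mul]
      _ ≤ _ := this
  -- combine
  have hnpos : (0 : ℝ) < n := by exact_mod_cast hn
  have hcoef : (0 : ℝ) ≤ (ν + p) / (2 * n) := by positivity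
  have h1 : -(1/2 : ℝ) * Real.log Θ.det ≥ -(p/2 : ℝ) * Real.log lam1 := by nlinarith [hlogdet]
  have h2 : ((ν + p) / (2 * n)) * ∑ i, Real.log (ν + x i ⬝ᵥ Θ *ᵥ x i)
      ≥ ((ν + p) / (2 * n)) * ((k : ℝ) * (Real.log lam1 + Real.log (δ ^ 2))) :=
    mul_le_mul_of_nonneg_left hsum hcoef
  have heq : ((ν + p) / (2 * n)) * ((k : ℝ) * (Real.log lam1 + Real.log (δ ^ 2))) - (p/2 : ℝ) * Real.log lam1
      = (((ν + p) / 2) * ((k : ℝ) / n) - p / 2) * Real.log lam1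
        + ((ν + p) / 2) * ((k : ℝ) / n) * Real.log (δ ^ 2) := by
    field_simp
    ring
  linarith [h1, h2, heq.le, heq.ge]
end
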